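/- arXiv:1002.4067 — 8 statements merged into one kernel-verified Lean document; each statement's English description precedes it below -/
import Mathlib

section
/- For every initial solution S, m-network R, and metabolite C, there exists an explanation for C with respect to S and R if and only if there exists a uniform explanation for C with respect to S and R. -/
/-- A biochemical rule: either binary `A₁ ∘ A₂ → C` or unary `A → C`. -/
inductive Rule (M : Type) where
  | binary (a₁ a₂ c : M) : Rule M
  | unary (a c : M) : Rule M
  deriving DecidableEq

namespace Rule

/-- The conclusion (produced metabolite) of a rule. -/
def concl {M : Type} : Rule M → M
  | .binary _ _ c => c
  | .unary _ c => c

/-- The premises of a rule, as a finite set. -/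
def premises {M : Type} [DecidableEq M] : Rule M → Finset M
  | .binary a₁ a₂ _ => {a₁, a₂}
  | .unary a _ => {a}

/-- The premises of a rule, as a set. -/
def premSet {M : Type} : Rule M → Set M
  | .binary a₁ a₂ _ => {a₁, a₂}
  | .unary a _ => {a}

end Rule

/-- Explanation trees: leaves `C[]`, unary nodes `C_r[E]`, binary nodes `C_r[E₁,E₂]`. -/
inductive Expl (M : Type) where
  | leaf (c : M) : Expl M
  | node1 (r : Rule M) (e : Expl M) : Expl M
  | node2 (r : Rule M) (e₁ e₂ : Expl M) : Expl M

namespace Expl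

/-- The root metabolite of an explanation. -/
def root {M : Type} : Expl M → M
  | .leaf c => c
  | .node1 r _ => r.concl
  | .node2 r _ _ => r.concl

/-- `ℛ(E)`: the set of rules used by an explanation. -/
def rules {M : Type} : Expl M → Set (Rule M)
  | .leaf _ => ∅
  | .node1 r e => {r} ∪ e.rules
  | .node2 r e₁ e₂ => {r} ∪ e₁.rules ∪ e₂.rules

/-- `ℳ(E)`: the set of metabolites required by an explanation. -/
def mets {M : Type} : Expl M → Set M
  | .leaf c => {c}
  | .node1 r e => r.premSet ∪ e.mets
  | .node2 r e₁ e₂ => r.premSet ∪ e₁.mets ∪ e₂.mets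

/-- Subexplanation (subtree) relation. -/
inductive Sub {M : Type} : Expl M → Expl M → Prop where
  | refl (e : Expl M) : Sub e e
  | node1 {e e' : Expl M} {r : Rule M} : Sub e e' → Sub e (.node1 r e')
  | left {e e₁ e₂ : Expl M} {r : Rule M} : Sub e e₁ → Sub e (.node2 r e₁ e₂)
  | right {e e₁ e₂ : Expl M} {r : Rule M} : Sub e e₂ → Sub e (.node2 r e₁ e₂)

/-- An explanation is uniform if any two subexplanations with the same root metabolite coincide. -/
def Uniform {M : Type} (E : Expl M) : Prop :=
  ∀ e₁ e₂ : Expl M, Sub e₁ E → Sub e₂ E → root e₁ = root e₂ → e₁ = e₂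

end Expl

/-- `IsExpl S R C E`: `E` is an explanation for `C` w.r.t. initial solution `S` and m-network `R`. -/
inductive IsExpl {M : Type} (S : Finset M) (R : Finset (Rule M)) : M → Expl M → Prop where
  | leaf {c : M} : c ∈ S → IsExpl S R c (.leaf c)
  | node1 {a c : M} {e : Expl M} : Rule.unary a c ∈ R → IsExpl S R a e →
      IsExpl S R c (.node1 (Rule.unary a c) e)
  | node2 {a₁ a₂ c : M} {e₁ e₂ : Expl M} : Rule.binary a₁ a₂ c ∈ R →
      IsExpl S R a₁ e₁ → IsExpl S R a₂ e₂ →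
      IsExpl S R c (.node2 (Rule.binary a₁ a₂ c) e₁ e₂)

/-- A rule `r ∈ R` is essential in `S` for `C`. -/
def Essential {M : Type} [DecidableEq M] (S : Finset M) (R : Finset (Rule M))
    (r : Rule M) (C : M) : Prop :=
  (∃ E : Expl M, IsExpl S R C E) ∧ ¬ ∃ E : Expl M, IsExpl S (R.erase r) C E

/-- Rules `r₁, r₂ ∈ R` are mutually essential in `S` for `C`. -/
def MutuallyEssential {M : Type} [DecidableEq M] (S : Finset M) (R : Finset (Rule M))
    (r₁ r₂ : Rule M) (C : M) : Prop :=
  (∃ E : Expl M, IsExpl S (R.erase r₁) C E) ∧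
  (∃ E : Expl M, IsExpl S (R.erase r₂) C E) ∧
  ¬ ∃ E : Expl M, IsExpl S ((R.erase r₁).erase r₂) C E

section Paths

variable {M : Type} [DecidableEq M]

/-- A path in `Gr((R,S₀))`, represented by its list of transition rules from a starting state. -/
inductive IsPath (R : Finset (Rule M)) : Finset M → List (Rule M) → Prop where
  | nil (S : Finset M) : IsPath R S []
  | cons {S : Finset M} {r : Rule M} {rs : List (Rule M)} :
      r ∈ R → r.premises ⊆ S → IsPath R (insert r.concl S) rs → IsPath R S (r :: rs)

/-- A χ-path: a path with no self-loop transitions (each step produces a genuinely new state). -/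
inductive IsChiPath (R : Finset (Rule M)) : Finset M → List (Rule M) → Prop where
  | nil (S : Finset M) : IsChiPath R S []
  | cons {S : Finset M} {r : Rule M} {rs : List (Rule M)} :
      r ∈ R → r.premises ⊆ S → r.concl ∉ S →
      IsChiPath R (insert r.concl S) rs → IsChiPath R S (r :: rs)

/-- `LeadsTo C S rs`: the path `rs` from `S` leads to `C`, i.e. its last produced metabolite
is `C` and its final state is the first state containing `C`. -/
def LeadsTo (C : M) : Finset M → List (Rule M) → Prop
  | _, [] => False
  | S, [r] => C ∉ S ∧ r.concl = C
  | S, r :: rs => C ∉ S ∧ LeadsTo C (insert r.concl S) rs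

/-- The final state of a path. -/
def run (S : Finset M) : List (Rule M) → Finset M
  | [] => S
  | r :: rs => run (insert r.concl S) rs

/-- Auxiliary predicate for ρ-paths: `Xs` accumulates the previously produced metabolites,
`Us` the union of the previous `Ŝᵢ = premises Θᵢ ∩ S₀`, `S` is the current state. -/
def IsRhoAux (R : Finset (Rule M)) (S₀ : Finset M) :
    Finset M → Finset M → Finset M → List (Rule M) → Prop
  | _, _, _, [] => True
  | Xs, Us, S, r :: rs =>
      r ∈ R ∧ r.premises ⊆ S ∧
      (r.concl ∈ S → r.concl ∈ S₀ ∧ r.concl ∉ Xs ∧ r.concl ∉ Us) ∧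
      IsRhoAux R S₀ (insert r.concl Xs) (Us ∪ (r.premises ∩ S₀)) (insert r.concl S) rs

/-- A ρ-path from `S₀` in `Gr((R,S₀))`. -/
def IsRhoPath (R : Finset (Rule M)) (S₀ : Finset M) (rs : List (Rule M)) : Prop :=
  IsRhoAux R S₀ ∅ ∅ S₀ rs

/-- `Ŝ₁ ∪ ⋯ ∪ Ŝ_m`: the union of the parts of `S₀` used by the transitions of the path. -/
def hatUnion (S₀ : Finset M) (rs : List (Rule M)) : Finset M :=
  rs.foldr (fun r acc => (r.premises ∩ S₀) ∪ acc) ∅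

/-- `𝒰(p) = (Ŝ₁ ∪ ⋯ ∪ Ŝ_m) \ {X₁,…,X_m}`. -/
def usedMet (S₀ : Finset M) (rs : List (Rule M)) : Finset M :=
  hatUnion S₀ rs \ (rs.map Rule.concl).toFinset

end Paths

section Stmt0Aux

open Classical

variable {M : Type}

/-- Height of an explanation tree. -/
def Expl.ht : Expl M → ℕ
  | .leaf _ => 0
  | .node1 _ e => e.ht + 1
  | .node2 _ e₁ e₂ => max e₁.ht e₂.ht + 1

/-- Minimal height of an explanation for `c`. -/
noncomputable def rank0 (S : Finset M) (R : Finset (Rule M)) (c : M) : ℕ :=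
  sInf {n | ∃ E : Expl M, IsExpl S R c E ∧ E.ht = n}

lemma rank0_le {S : Finset M} {R : Finset (Rule M)} {c : M} {E : Expl M}
    (h : IsExpl S R c E) : rank0 S R c ≤ E.ht :=
  Nat.sInf_le ⟨E, h, rfl⟩

lemma exists_min {S : Finset M} {R : Finset (Rule M)} {c : M}
    (h : ∃ E : Expl M, IsExpl S R c E) :
    ∃ E : Expl M, IsExpl S R c E ∧ E.ht = rank0 S R c := by
  obtain ⟨E, hE⟩ := h
  have : rank0 S R c ∈ {n | ∃ E : Expl M, IsExpl S R c E ∧ E.ht = n} :=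
    Nat.sInf_mem ⟨E.ht, E, hE, rfl⟩
  exact this

lemma isExpl_root {S : Finset M} {R : Finset (Rule M)} {c : M} {E : Expl M}
    (h : IsExpl S R c E) : E.root = c := by
  cases h <;> rfl

lemma step0 {S : Finset M} {R : Finset (Rule M)} {c : M}
    (h : ∃ E : Expl M, IsExpl S R c E) (hs : c ∉ S) :
    (∃ a, Rule.unary a c ∈ R ∧ (∃ E : Expl M, IsExpl S R a E) ∧
        rank0 S R a < rank0 S R c) ∨
    (∃ a₁ a₂, Rule.binary a₁ a₂ c ∈ R ∧ (∃ E : Expl M, IsExpl S R a₁ E) ∧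
        (∃ E : Expl M, IsExpl S R a₂ E) ∧
        rank0 S R a₁ < rank0 S R c ∧ rank0 S R a₂ < rank0 S R c) := by
  obtain ⟨E, hE, hht⟩ := exists_min h
  cases hE with
  | leaf hc => exact absurd hc hs
  | @node1 a c e hr he =>
    left
    refine ⟨a, hr, ⟨e, he⟩, ?_⟩
    have h1 : rank0 S R a ≤ e.ht := rank0_le he
    have : e.ht < (Expl.node1 (Rule.unary a c) e).ht := by
      simp [Expl.ht]
    omega
  | @node2 a₁ a₂ c e₁ e₂ hr h1 h2 =>
    right
    refine ⟨a₁, a₂, hr, ⟨e₁, h1⟩, ⟨e₂, h2⟩, ?_, ?_⟩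
    · have := rank0_le h1
      have : e₁.ht < (Expl.node2 (Rule.binary a₁ a₂ c) e₁ e₂).ht := by
        simp [Expl.ht]
      have := rank0_le h1
      omega
    · have := rank0_le h2
      have : e₂.ht < (Expl.node2 (Rule.binary a₁ a₂ c) e₁ e₂).ht := by
        simp [Expl.ht]
      have := rank0_le h2
      omega

/-- Canonical explanation for each derivable metabolite. -/
noncomputable def canon (S : Finset M) (R : Finset (Rule M)) (c : M) : Expl M :=
  if h : (∃ E : Expl M, IsExpl S R c E) ∧ c ∉ S then
    if h1 : ∃ a, Rule.unary a c ∈ R ∧ (∃ E : Expl M, IsExpl S R a E) ∧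
        rank0 S R a < rank0 S R c then
      Expl.node1 (Rule.unary h1.choose c) (canon S R h1.choose)
    else
      have h2 := (step0 h.1 h.2).resolve_left h1
      Expl.node2 (Rule.binary h2.choose h2.choose_spec.choose c)
        (canon S R h2.choose) (canon S R h2.choose_spec.choose)
  else Expl.leaf c
termination_by rank0 S R c
decreasing_by
  · exact h1.choose_spec.2.2
  · exact h2.choose_spec.choose_spec.2.2.2.1
  · exact h2.choose_spec.choose_spec.2.2.2.2

lemma canon_isExpl (S : Finset M) (R : Finset (Rule M)) :
    ∀ c : M, (∃ E : Expl M, IsExpl S R c E) → IsExpl S R c (canon S R c) := by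
  suffices H : ∀ n c, rank0 S R c = n → (∃ E : Expl M, IsExpl S R c E) →
      IsExpl S R c (canon S R c) by
    intro c; exact H _ c rfl
  intro n
  induction n using Nat.strong_induction_on with
  | _ n ih =>
    intro c hn h
    subst hn
    rw [canon]
    by_cases hs : c ∈ S
    · simp only [hs, not_true_eq_false, and_false, dite_false]
      exact IsExpl.leaf hs
    · simp only [h, hs, not_false_eq_true, and_true, true_and, dite_true]
      by_cases h1 : ∃ a, Rule.unary a c ∈ R ∧ (∃ E : Expl M, IsExpl S R a E) ∧
          rank0 S R a < rank0 S R c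
      · simp only [h1, dite_true]
        obtain ⟨hr, hd, hlt⟩ := h1.choose_spec
        exact IsExpl.node1 hr (ih _ hlt _ rfl hd)
      · simp only [h1, dite_false]
        have h2 := (step0 h hs).resolve_left h1
        obtain ⟨hr, hd1, hd2, hlt1, hlt2⟩ := h2.choose_spec.choose_spec
        exact IsExpl.node2 hr (ih _ hlt1 _ rfl hd1) (ih _ hlt2 _ rfl hd2)

lemma canon_root (S : Finset M) (R : Finset (Rule M)) {c : M}
    (h : ∃ E : Expl M, IsExpl S R c E) : (canon S R c).root = c :=
  isExpl_root (canon_isExpl S R c h)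

lemma canon_sub (S : Finset M) (R : Finset (Rule M)) :
    ∀ c : M, (∃ E : Expl M, IsExpl S R c E) →
      ∀ e : Expl M, Expl.Sub e (canon S R c) → e = canon S R e.root := by
  suffices H : ∀ n c, rank0 S R c = n → (∃ E : Expl M, IsExpl S R c E) →
      ∀ e : Expl M, Expl.Sub e (canon S R c) → e = canon S R e.root by
    intro c; exact H _ c rfl
  intro n
  induction n using Nat.strong_induction_on with
  | _ n ih =>
    intro c hn h e hsub
    subst hn
    by_cases hs : c ∈ S
    · have hceq : canon S R c = Expl.leaf c := by
        conv_lhs => rw [canon]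
        simp [hs]
      rw [hceq] at hsub
      cases hsub
      exact hceq.symm
    · by_cases h1 : ∃ a, Rule.unary a c ∈ R ∧ (∃ E : Expl M, IsExpl S R a E) ∧
          rank0 S R a < rank0 S R c
      · obtain ⟨hr, hd, hlt⟩ := h1.choose_spec
        have hceq : canon S R c =
            Expl.node1 (Rule.unary h1.choose c) (canon S R h1.choose) := by
          conv_lhs => rw [canon]
          simp only [h, hs, not_false_eq_true, and_true, true_and, dite_true, h1]
        rw [hceq] at hsub
        cases hsub with
        | refl => exact hceq.symm
        | node1 hsub' => exact ih _ hlt _ rfl hd _ hsub'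
      · have h2 := (step0 h hs).resolve_left h1
        obtain ⟨hr, hd1, hd2, hlt1, hlt2⟩ := h2.choose_spec.choose_spec
        have hceq : canon S R c =
            Expl.node2 (Rule.binary h2.choose h2.choose_spec.choose c)
              (canon S R h2.choose) (canon S R h2.choose_spec.choose) := by
          conv_lhs => rw [canon]
          simp only [h, hs, not_false_eq_true, and_true, true_and, dite_true, h1,
            dite_false]
        rw [hceq] at hsub
        cases hsub with
        | refl => exact hceq.symm
        | left hsub' => exact ih _ hlt1 _ rfl hd1 _ hsub'
        | right hsub' => exact ih _ hlt2 _ rfl hd2 _ hsub'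

end Stmt0Aux

/-- there exists an explanation for `C` w.r.t. `S` and `R` iff
there exists a uniform explanation for `C` w.r.t. `S` and `R`. -/
theorem stmt0 {M : Type} (S : Finset M) (R : Finset (Rule M)) (C : M) :
    (∃ E : Expl M, IsExpl S R C E) ↔ (∃ E : Expl M, IsExpl S R C E ∧ E.Uniform) := by
  constructor
  · intro h
    refine ⟨canon S R C, canon_isExpl S R C h, ?_⟩
    intro e₁ e₂ h₁ h₂ hroot
    have e1 := canon_sub S R C h e₁ h₁
    have e2 := canon_sub S R C h e₂ h₂
    rw [e1, e2, hroot]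
  · rintro ⟨E, hE, -⟩
    exact ⟨E, hE⟩
end

section
/- If rules r₁, r₂ ∈ R are mutually essential in S for a metabolite C, then every explanation E₁ for C with respect to S and R\{r₁} satisfies r₂ ∈ ℛ(E₁) and r₁ ∉ ℛ(E₁), every explanation E₂ for C with respect to S and R\{r₂} satisfies r₁ ∈ ℛ(E₂) and r₂ ∉ ℛ(E₂), and consequently every such E₁ is vicarious of every such E₂, i.e. ℛ(E₁) ≠ ℛ(E₂). -/
theorem isExpl_rules_subset {M : Type} {S : Finset M} {R : Finset (Rule M)} {C : M}
    {E : Expl M} (h : IsExpl S R C E) : E.rules ⊆ ↑R := by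
  induction h with
  | leaf _ => simp [Expl.rules]
  | node1 hr _ ih =>
    intro x hx; rcases hx with hx | hx
    · rw [Set.mem_singleton_iff] at hx; subst hx; exact hr
    · exact ih hx
  | node2 hr _ _ ih₁ ih₂ =>
    intro x hx; rcases hx with (hx | hx) | hx
    · rw [Set.mem_singleton_iff] at hx; subst hx; exact hr
    · exact ih₁ hx
    · exact ih₂ hx

theorem isExpl_erase {M : Type} [DecidableEq M] {S : Finset M} {R : Finset (Rule M)} {C : M}
    {E : Expl M} (h : IsExpl S R C E) (r : Rule M) (hr : r ∉ E.rules) :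
    IsExpl S (R.erase r) C E := by
  induction h with
  | leaf hc => exact .leaf hc
  | node1 hrr _ ih =>
      simp only [Expl.rules, Set.mem_union, Set.mem_singleton_iff, not_or] at hr
      exact .node1 (Finset.mem_erase.mpr ⟨fun h => hr.1 h.symm, hrr⟩) (ih hr.2)
  | node2 hrr _ _ ih₁ ih₂ =>
      simp only [Expl.rules, Set.mem_union, Set.mem_singleton_iff, not_or] at hr
      exact .node2 (Finset.mem_erase.mpr ⟨fun h => hr.1.1 h.symm, hrr⟩) (ih₁ hr.1.2) (ih₂ hr.2)

/-- mutually essential rules and vicarious explanations. -/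
theorem stmt2 {M : Type} [DecidableEq M] (S : Finset M) (R : Finset (Rule M))
    (r₁ r₂ : Rule M) (C : M) (hr₁ : r₁ ∈ R) (hr₂ : r₂ ∈ R)
    (hme : MutuallyEssential S R r₁ r₂ C) :
    (∀ E₁ : Expl M, IsExpl S (R.erase r₁) C E₁ → r₂ ∈ E₁.rules ∧ r₁ ∉ E₁.rules) ∧
    (∀ E₂ : Expl M, IsExpl S (R.erase r₂) C E₂ → r₁ ∈ E₂.rules ∧ r₂ ∉ E₂.rules) ∧
    (∀ E₁ E₂ : Expl M, IsExpl S (R.erase r₁) C E₁ → IsExpl S (R.erase r₂) C E₂ →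
      E₁.rules ≠ E₂.rules) := by
  obtain ⟨_, _, hno⟩ := hme
  have h1 : ∀ E₁ : Expl M, IsExpl S (R.erase r₁) C E₁ → r₂ ∈ E₁.rules ∧ r₁ ∉ E₁.rules := by
    intro E₁ hE₁
    constructor
    · by_contra h
      exact hno ⟨E₁, isExpl_erase hE₁ r₂ h⟩
    · intro h
      have := isExpl_rules_subset hE₁ h
      simp at this
  have h2 : ∀ E₂ : Expl M, IsExpl S (R.erase r₂) C E₂ → r₁ ∈ E₂.rules ∧ r₂ ∉ E₂.rules := by
    intro E₂ hE₂
    constructor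
    · by_contra h
      have := isExpl_erase hE₂ r₁ h
      rw [Finset.erase_right_comm] at this
      exact hno ⟨E₂, this⟩
    · intro h
      have := isExpl_rules_subset hE₂ h
      simp at this
  refine ⟨h1, h2, fun E₁ E₂ hE₁ hE₂ heq => ?_⟩
  exact (h2 E₂ hE₂).2 (heq ▸ (h1 E₁ hE₁).1)
end

section
/- A metabolite B cannot be excluded for the production of a metabolite C (i.e., there is no explanation for C with respect to S\{B} and R) if and only if every explanation for C with respect to S and R contains the leaf B[] as a subexplanation. -/
lemma isExpl_mono {M : Type} {S S' : Finset M} {R : Finset (Rule M)} {C : M} {E : Expl M}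
    (hss : S ⊆ S') (h : IsExpl S R C E) : IsExpl S' R C E := by
  induction h with
  | leaf hc => exact .leaf (hss hc)
  | node1 hr _ ih => exact .node1 hr ih
  | node2 hr _ _ ih1 ih2 => exact .node2 hr ih1 ih2

lemma isExpl_of_sub {M : Type} {S : Finset M} {R : Finset (Rule M)} {C : M} {E e : Expl M}
    (h : IsExpl S R C E) (hs : Expl.Sub e E) : IsExpl S R e.root e := by
  induction hs generalizing C with
  | refl =>
    cases h with
    | leaf hc => exact .leaf hc
    | node1 hr h1 => exact .node1 hr h1
    | node2 hr h1 h2 => exact .node2 hr h1 h2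
  | node1 _ ih => cases h with | node1 hr h1 => exact ih h1
  | left _ ih => cases h with | node2 hr h1 h2 => exact ih h1
  | right _ ih => cases h with | node2 hr h1 h2 => exact ih h2

lemma isExpl_erase_of_not_sub {M : Type} [DecidableEq M] {S : Finset M} {R : Finset (Rule M)}
    {C B : M} {E : Expl M} (h : IsExpl S R C E) (hn : ¬ Expl.Sub (Expl.leaf B) E) :
    IsExpl (S.erase B) R C E := by
  induction h with
  | @leaf c hc =>
    refine .leaf (Finset.mem_erase.2 ⟨?_, hc⟩)
    rintro rfl
    exact hn (.refl _)
  | node1 hr _ ih => exact .node1 hr (ih fun hs => hn (.node1 hs))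
  | node2 hr _ _ ih1 ih2 =>
    exact .node2 hr (ih1 fun hs => hn (.left hs)) (ih2 fun hs => hn (.right hs))

/-- `B` cannot be excluded for the production of `C` iff every explanation
for `C` w.r.t. `S` and `R` contains the leaf `B[]` as a subexplanation. -/
theorem stmt3 {M : Type} [DecidableEq M] (S : Finset M) (R : Finset (Rule M))
    (B C : M) (hB : B ∈ S) (hC : C ∉ S) :
    (¬ ∃ E : Expl M, IsExpl (S.erase B) R C E) ↔
    (∀ E : Expl M, IsExpl S R C E → Expl.Sub (Expl.leaf B) E) := by
  constructor
  · intro h E hE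
    by_contra hsub
    exact h ⟨E, isExpl_erase_of_not_sub hE hsub⟩
  · rintro h ⟨E, hE⟩
    have hE' : IsExpl S R C E := isExpl_mono (Finset.erase_subset _ _) hE
    have h2 := isExpl_of_sub hE (h E hE')
    cases h2 with
    | leaf hc => exact (Finset.notMem_erase B S) hc
end

section
/- Suppose C is the conclusion of rule r₂ ∈ R, C ∉ S, and r₂ is the unique rule of R whose conclusion is C. If r₁ causes r₂ (r₁ ⊑ r₂), then the conclusion A of r₁ is necessary for C, i.e. A ∈ ℳ(E) for every explanation E for C with respect to S and R. -/
/-- `Causes S R r₁ r₂` (`r₁ ⊑ r₂`): every explanation of the conclusion of `r₂` whose root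
is a node labelled `r₂` uses `r₁` in its immediate subexplanations. -/
def Causes {M : Type} (S : Finset M) (R : Finset (Rule M)) (r₁ r₂ : Rule M) : Prop :=
  (∀ E₁ E₂ : Expl M, IsExpl S R r₂.concl (Expl.node2 r₂ E₁ E₂) → r₁ ∈ E₁.rules ∪ E₂.rules) ∧
  (∀ E₁ : Expl M, IsExpl S R r₂.concl (Expl.node1 r₂ E₁) → r₁ ∈ E₁.rules)

lemma concl_mem_of_rule_used {M : Type} {S : Finset M} {R : Finset (Rule M)}
    {A : M} {e : Expl M} {r₁ : Rule M} (h : IsExpl S R A e) (hr : r₁ ∈ e.rules) :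
    r₁.concl ∈ insert A e.mets := by
  induction h with
  | leaf _ => simp [Expl.rules] at hr
  | @node1 a c e' hm he ih =>
      simp only [Expl.rules, Set.mem_union, Set.mem_singleton_iff] at hr
      rcases hr with rfl | hr
      · simp [Rule.concl, Expl.mets]
      · have := ih hr
        simp only [Set.mem_insert_iff] at this
        rcases this with rfl | h'
        · simp [Expl.mets, Rule.premSet]
        · simp [Expl.mets, h']
  | @node2 a₁ a₂ c e₁ e₂ hm h1 h2 ih1 ih2 =>
      simp only [Expl.rules, Set.mem_union, Set.mem_singleton_iff] at hr
      rcases hr with (rfl | hr) | hr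
      · simp [Rule.concl, Expl.mets]
      · have := ih1 hr
        simp only [Set.mem_insert_iff] at this
        rcases this with rfl | h'
        · simp [Expl.mets, Rule.premSet]
        · simp [Expl.mets, h']
      · have := ih2 hr
        simp only [Set.mem_insert_iff] at this
        rcases this with rfl | h'
        · simp [Expl.mets, Rule.premSet]
        · simp [Expl.mets, h']

/-- if `C = concl r₂ ∉ S`, `r₂` is the unique rule of `R` concluding `C`, and
`r₁ ⊑ r₂`, then the conclusion of `r₁` is necessary for `C`. -/
theorem stmt5 {M : Type} (S : Finset M) (R : Finset (Rule M)) (r₁ r₂ : Rule M) (C : M)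
    (hr₂ : r₂ ∈ R) (hconcl : r₂.concl = C) (hCS : C ∉ S)
    (huniq : ∀ r ∈ R, r.concl = C → r = r₂)
    (hcauses : Causes S R r₁ r₂) :
    ∀ E : Expl M, IsExpl S R C E → r₁.concl ∈ E.mets := by
  intro E hE
  cases hE with
  | leaf hc => exact absurd hc hCS
  | @node1 a _ e hm he =>
      have hr : Rule.unary a C = r₂ := huniq _ hm rfl
      have hcon : r₂.concl = C := hconcl
      have hr1 : r₁ ∈ e.rules := by
        apply hcauses.2
        rw [hcon, ← hr]
        exact IsExpl.node1 hm he
      have := concl_mem_of_rule_used he hr1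
      simp only [Set.mem_insert_iff] at this
      rcases this with rfl | h'
      · simp [Expl.mets, Rule.premSet]
      · simp [Expl.mets, h']
  | @node2 a₁ a₂ _ e₁ e₂ hm h1 h2 =>
      have hr : Rule.binary a₁ a₂ C = r₂ := huniq _ hm rfl
      have hr1 : r₁ ∈ e₁.rules ∪ e₂.rules := by
        apply hcauses.1
        rw [hconcl, ← hr]
        exact IsExpl.node2 hm h1 h2
      rcases hr1 with hr1 | hr1
      · have := concl_mem_of_rule_used h1 hr1
        simp only [Set.mem_insert_iff] at this
        rcases this with rfl | h'
        · simp [Expl.mets, Rule.premSet]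
        · simp [Expl.mets, h']
      · have := concl_mem_of_rule_used h2 hr1
        simp only [Set.mem_insert_iff] at this
        rcases this with rfl | h'
        · simp [Expl.mets, Rule.premSet]
        · simp [Expl.mets, h']
end

section
/- (Correspondence) If p is a χ-path from S₀ in Gr((R,S₀)) leading to a metabolite C, with transition rules Θ₁,…,Θ_m, then there exists an explanation E for C with respect to S₀ and R whose set of used rules ℛ(E) is contained in {Θ₁,…,Θ_m}. -/
private lemma aux_run {M : Type} [DecidableEq M] (R : Finset (Rule M)) (S₀ : Finset M)
    (T : Set (Rule M)) :
    ∀ (rs : List (Rule M)) (S : Finset M), IsChiPath R S rs → (∀ r ∈ rs, r ∈ T) →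
      (∀ x ∈ S, ∃ E : Expl M, IsExpl S₀ R x E ∧ E.rules ⊆ T) →
      ∀ x ∈ run S rs, ∃ E : Expl M, IsExpl S₀ R x E ∧ E.rules ⊆ T := by
  intro rs
  induction rs with
  | nil => intro S _ _ hS x hx; exact hS x hx
  | cons r rs ih =>
    intro S hp hT hS x hx
    cases hp with
    | cons hrR hprem _ htail =>
      refine ih (insert r.concl S) htail (fun r' hr' => hT r' (List.mem_cons_of_mem _ hr')) ?_ x hx
      intro y hy
      rcases Finset.mem_insert.mp hy with h | h
      · subst h
        have hrT : r ∈ T := hT r List.mem_cons_self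
        cases r with
        | unary a c =>
          have ha : a ∈ S := hprem (by simp [Rule.premises])
          obtain ⟨E, hE, hEr⟩ := hS a ha
          exact ⟨.node1 (.unary a c) E, .node1 hrR hE, by
            simp only [Expl.rules]
            exact Set.union_subset (by simpa using hrT) hEr⟩
        | binary a₁ a₂ c =>
          have ha₁ : a₁ ∈ S := hprem (by simp [Rule.premises])
          have ha₂ : a₂ ∈ S := hprem (by simp [Rule.premises])
          obtain ⟨E₁, hE₁, hEr₁⟩ := hS a₁ ha₁
          obtain ⟨E₂, hE₂, hEr₂⟩ := hS a₂ ha₂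
          exact ⟨.node2 (.binary a₁ a₂ c) E₁ E₂, .node2 hrR hE₁ hE₂, by
            simp only [Expl.rules]
            exact Set.union_subset (Set.union_subset (by simpa using hrT) hEr₁) hEr₂⟩
      · exact hS y h

private lemma leadsTo_mem_run {M : Type} [DecidableEq M] (C : M) :
    ∀ (rs : List (Rule M)) (S : Finset M), LeadsTo C S rs → C ∈ run S rs := by
  intro rs
  induction rs with
  | nil => intro S h; exact absurd h (by simp [LeadsTo])
  | cons r rs ih =>
    intro S h
    cases rs with
    | nil =>
      obtain ⟨_, hc⟩ := h
      simp [run, ← hc]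
    | cons r' rs' =>
      obtain ⟨_, h2⟩ := h
      exact ih _ h2

/-- Correspondence: if `rs` is a χ-path from `S₀` in `Gr((R,S₀))` leading
to `C`, then there is an explanation `E` for `C` w.r.t. `S₀` and `R` with `ℛ(E)` contained
in the set of rules of the path. -/
theorem stmt6 {M : Type} [DecidableEq M] (R : Finset (Rule M)) (S₀ : Finset M) (C : M)
    (rs : List (Rule M)) (hχ : IsChiPath R S₀ rs) (hl : LeadsTo C S₀ rs) :
    ∃ E : Expl M, IsExpl S₀ R C E ∧ E.rules ⊆ {r : Rule M | r ∈ rs} := by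
  have hC : C ∈ run S₀ rs := leadsTo_mem_run C rs S₀ hl
  refine aux_run R S₀ {r : Rule M | r ∈ rs} rs S₀ hχ (fun r hr => hr) ?_ C hC
  intro x hx
  exact ⟨.leaf x, .leaf hx, by simp [Expl.rules]⟩
end

section
/- For every uniform explanation E for a metabolite C with respect to S₀ and R, there exists a path from S₀ in Gr((R,S₀)) whose final state contains C and whose set of transition rules equals ℛ(E). -/
section Aux

variable {M : Type} [DecidableEq M]

lemma run_append (S : Finset M) (l₁ l₂ : List (Rule M)) :
    run S (l₁ ++ l₂) = run (run S l₁) l₂ := by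
  induction l₁ generalizing S with
  | nil => rfl
  | cons r rs ih => simpa [run] using ih (insert r.concl S)

lemma subset_run (S : Finset M) (rs : List (Rule M)) : S ⊆ run S rs := by
  induction rs generalizing S with
  | nil => exact subset_rfl
  | cons r rs ih =>
      exact (Finset.subset_insert _ _).trans (ih (insert r.concl S))

lemma IsPath.append {R : Finset (Rule M)} {S : Finset M} {l₁ l₂ : List (Rule M)}
    (h₁ : IsPath R S l₁) (h₂ : IsPath R (run S l₁) l₂) : IsPath R S (l₁ ++ l₂) := by
  induction h₁ with
  | nil S => exact h₂
  | cons hr hprem _ ih => exact IsPath.cons hr hprem (ih h₂)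

lemma stmt7_aux {R : Finset (Rule M)} {S₀ : Finset M} {C : M} {E : Expl M}
    (hE : IsExpl S₀ R C E) : ∀ S : Finset M, S₀ ⊆ S →
    ∃ rs : List (Rule M), IsPath R S rs ∧ C ∈ run S rs ∧ S ⊆ run S rs ∧
      {r : Rule M | r ∈ rs} = E.rules := by
  induction hE with
  | leaf hc =>
      intro S hS
      exact ⟨[], IsPath.nil S, hS hc, subset_rfl, by simp [Expl.rules]⟩
  | @node1 a c e hr _ ih =>
      intro S hS
      obtain ⟨rs, hp, ha, hsub, hset⟩ := ih S hS
      refine ⟨rs ++ [(Rule.unary a c)], ?_, ?_, ?_, ?_⟩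
      · refine hp.append (IsPath.cons hr ?_ (IsPath.nil _))
        simp [Rule.premises, Finset.singleton_subset_iff, ha]
      · simp [run_append, run, Rule.concl]
      · refine hsub.trans ?_
        simp [run_append, run, Finset.subset_insert]
      · ext r
        simp only [Set.mem_setOf_eq, List.mem_append, List.mem_singleton, Expl.rules,
          Set.mem_union, Set.mem_singleton_iff]
        rw [← Set.ext_iff.mp hset r]
        tauto
  | @node2 a₁ a₂ c e₁ e₂ hr _ _ ih₁ ih₂ =>
      intro S hS
      obtain ⟨rs₁, hp₁, ha₁, hsub₁, hset₁⟩ := ih₁ S hS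
      obtain ⟨rs₂, hp₂, ha₂, hsub₂, hset₂⟩ := ih₂ (run S rs₁) (hS.trans hsub₁)
      refine ⟨rs₁ ++ (rs₂ ++ [(Rule.binary a₁ a₂ c)]), ?_, ?_, ?_, ?_⟩
      · refine hp₁.append (hp₂.append ?_)
        refine IsPath.cons hr ?_ (IsPath.nil _)
        intro x hx
        simp only [Rule.premises, Finset.mem_insert, Finset.mem_singleton] at hx
        rcases hx with rfl | rfl
        · exact hsub₂ ha₁
        · exact ha₂
      · simp [run_append, run, Rule.concl]
      · refine (hsub₁.trans (hsub₂.trans ?_))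
        simp [run_append, run, Finset.subset_insert]
      · ext r
        simp only [Set.mem_setOf_eq, List.mem_append, List.mem_singleton, Expl.rules,
          Set.mem_union, Set.mem_singleton_iff]
        rw [← Set.ext_iff.mp hset₁ r, ← Set.ext_iff.mp hset₂ r]
        tauto

end Aux

/-- every uniform explanation `E` for `C` w.r.t. `S₀` and `R` yields a path
from `S₀` in `Gr((R,S₀))` whose final state contains `C` and whose set of transition rules
equals `ℛ(E)`. -/
theorem stmt7 {M : Type} [DecidableEq M] (R : Finset (Rule M)) (S₀ : Finset M) (C : M)
    (E : Expl M) (hE : IsExpl S₀ R C E) (hU : E.Uniform) :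
    ∃ rs : List (Rule M), IsPath R S₀ rs ∧ C ∈ run S₀ rs ∧
      {r : Rule M | r ∈ rs} = E.rules := by
  obtain ⟨rs, hp, hC, _, hset⟩ := stmt7_aux hE S₀ subset_rfl
  exact ⟨rs, hp, hC, hset⟩
end

section
/- Let C ∉ S₀ and B be metabolites. If every χ-path S₀ →_{Θ₁,Ŝ₁,X₁} S₁ → ⋯ →_{Θ_m,Ŝ_m,X_m} S_m from S₀ in Gr((R,S₀)) leading to C satisfies (i) B ∈ S_{m−1} and (ii) B ∈ S₀ implies B ∈ Ŝ₁ ∪ ⋯ ∪ Ŝ_m, then B is necessary for the production of C, i.e. B ∈ ℳ(E) for every explanation E for C with respect to S₀ and R. -/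
section Aux

variable {M : Type} [DecidableEq M]

lemma mem_premSet_of_mem_premises {r : Rule M} {x : M} (h : x ∈ r.premises) :
    x ∈ r.premSet := by
  cases r <;> simp [Rule.premises, Rule.premSet] at h ⊢ <;> tauto

lemma run_eq (S : Finset M) (rs : List (Rule M)) :
    run S rs = S ∪ (rs.map Rule.concl).toFinset := by
  induction rs generalizing S with
  | nil => simp [run]
  | cons r rs ih =>
      simp only [run, ih, List.map_cons, List.toFinset_cons]
      ext x; simp


lemma chi_append {R : Finset (Rule M)} {S : Finset M} {l₁ l₂ : List (Rule M)}
    (h₁ : IsChiPath R S l₁) (h₂ : IsChiPath R (run S l₁) l₂) :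
    IsChiPath R S (l₁ ++ l₂) := by
  induction h₁ with
  | nil => simpa [run] using h₂
  | cons hr hp hn _ ih =>
      exact IsChiPath.cons hr hp hn (ih (by simpa [run] using h₂))

lemma chi_snoc {R : Finset (Rule M)} {S : Finset M} {rs : List (Rule M)} {r : Rule M}
    (h : IsChiPath R S rs) (hr : r ∈ R) (hp : r.premises ⊆ run S rs)
    (hn : r.concl ∉ run S rs) : IsChiPath R S (rs ++ [r]) :=
  chi_append h (IsChiPath.cons hr hp hn (IsChiPath.nil _))

lemma mem_hatUnion {S₀ : Finset M} {rs : List (Rule M)} {x : M} :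
    x ∈ hatUnion S₀ rs ↔ ∃ r ∈ rs, x ∈ r.premises ∩ S₀ := by
  induction rs with
  | nil => simp [hatUnion]
  | cons r rs ih =>
      simp only [hatUnion, List.foldr_cons, Finset.mem_union, List.mem_cons] at ih ⊢
      constructor
      · rintro (hx | hx)
        · exact ⟨r, Or.inl rfl, hx⟩
        · obtain ⟨r', hr', hx⟩ := ih.1 hx
          exact ⟨r', Or.inr hr', hx⟩
      · rintro ⟨r', (rfl | hr'), hx⟩
        · exact Or.inl hx
        · exact Or.inr (ih.2 ⟨r', hr', hx⟩)

lemma prem_subset_mets {S₀ : Finset M} {R : Finset (Rule M)} {c : M} {E : Expl M}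
    (hE : IsExpl S₀ R c E) {r : Rule M} (hr : r ∈ E.rules) : r.premSet ⊆ E.mets := by
  induction hE with
  | leaf _ => simp [Expl.rules] at hr
  | node1 _ _ ih =>
      simp only [Expl.rules, Set.mem_union, Set.mem_singleton_iff] at hr
      rcases hr with rfl | hr
      · exact fun x hx => Or.inl hx
      · exact fun x hx => Or.inr (ih hr hx)
  | node2 _ _ _ ih₁ ih₂ =>
      simp only [Expl.rules, Set.mem_union, Set.mem_singleton_iff] at hr
      rcases hr with (rfl | hr) | hr
      · exact fun x hx => Or.inl (Or.inl hx)
      · exact fun x hx => Or.inl (Or.inr (ih₁ hr hx))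
      · exact fun x hx => Or.inr (ih₂ hr hx)

lemma concl_mem_mets {S₀ : Finset M} {R : Finset (Rule M)} {c : M} {E : Expl M}
    (hE : IsExpl S₀ R c E) {r : Rule M} (hr : r ∈ E.rules) :
    r.concl = c ∨ r.concl ∈ E.mets := by
  induction hE with
  | leaf _ => simp [Expl.rules] at hr
  | node1 h _ ih =>
      simp only [Expl.rules, Set.mem_union, Set.mem_singleton_iff] at hr
      rcases hr with rfl | hr
      · exact Or.inl rfl
      · rcases ih hr with h' | h'
        · exact Or.inr (Or.inl (by rw [h']; simp [Rule.premSet]))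
        · exact Or.inr (Or.inr h')
  | node2 h _ _ ih₁ ih₂ =>
      simp only [Expl.rules, Set.mem_union, Set.mem_singleton_iff] at hr
      rcases hr with (rfl | hr) | hr
      · exact Or.inl rfl
      · rcases ih₁ hr with h' | h'
        · exact Or.inr (Or.inl (Or.inl (by rw [h']; simp [Rule.premSet])))
        · exact Or.inr (Or.inl (Or.inr h'))
      · rcases ih₂ hr with h' | h'
        · exact Or.inr (Or.inl (Or.inl (by rw [h']; simp [Rule.premSet])))
        · exact Or.inr (Or.inr h')

/-- From an explanation, produce a χ-path realizing its conclusion. -/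
lemma produce {S₀ : Finset M} {R : Finset (Rule M)} {c : M} {E : Expl M}
    (hE : IsExpl S₀ R c E) :
    ∀ S : Finset M, S₀ ⊆ S → ∃ rs : List (Rule M),
      IsChiPath R S rs ∧ (∀ r ∈ rs, r ∈ E.rules) ∧ c ∈ run S rs := by
  induction hE with
  | leaf hc =>
      intro S hS
      exact ⟨[], IsChiPath.nil _, by simp, hS hc⟩
  | @node1 a c e hR _ ih =>
      intro S hS
      obtain ⟨rs₁, hchi, hmem, ha⟩ := ih S hS
      by_cases hc : c ∈ run S rs₁
      · exact ⟨rs₁, hchi, fun r hr => Or.inr (hmem r hr), hc⟩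
      · refine ⟨rs₁ ++ [Rule.unary a c], ?_, ?_, ?_⟩
        · exact chi_snoc hchi hR (by simp [Rule.premises, Finset.singleton_subset_iff, ha]) hc
        · intro r hr
          rcases List.mem_append.1 hr with h | h
          · exact Or.inr (hmem r h)
          · simp at h; subst h; exact Or.inl rfl
        · rw [run_append]; simp [run, Rule.concl]
  | @node2 a₁ a₂ c e₁ e₂ hR _ _ ih₁ ih₂ =>
      intro S hS
      obtain ⟨rs₁, hchi₁, hmem₁, ha₁⟩ := ih₁ S hS
      obtain ⟨rs₂, hchi₂, hmem₂, ha₂⟩ := ih₂ (run S rs₁) (hS.trans (subset_run _ _))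
      have hchi : IsChiPath R S (rs₁ ++ rs₂) := chi_append hchi₁ hchi₂
      have ha₁' : a₁ ∈ run S (rs₁ ++ rs₂) := by
        rw [run_append]; exact subset_run _ _ ha₁
      have ha₂' : a₂ ∈ run S (rs₁ ++ rs₂) := by rw [run_append]; exact ha₂
      have hmem : ∀ r ∈ rs₁ ++ rs₂, r ∈ (Expl.node2 (Rule.binary a₁ a₂ c) e₁ e₂).rules := by
        intro r hr
        rcases List.mem_append.1 hr with h | h
        · exact Or.inl (Or.inr (hmem₁ r h))
        · exact Or.inr (hmem₂ r h)
      by_cases hc : c ∈ run S (rs₁ ++ rs₂)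
      · exact ⟨rs₁ ++ rs₂, hchi, hmem, hc⟩
      · refine ⟨(rs₁ ++ rs₂) ++ [Rule.binary a₁ a₂ c], ?_, ?_, ?_⟩
        · refine chi_snoc hchi hR ?_ hc
          intro x hx
          simp [Rule.premises] at hx
          rcases hx with rfl | rfl <;> assumption
        · intro r hr
          rcases List.mem_append.1 hr with h | h
          · exact hmem r h
          · simp at h; subst h; exact Or.inl (Or.inl rfl)
        · rw [run_append]; simp [run, Rule.concl]

/-- Truncate a χ-path at the first production of `C` to obtain one leading to `C`. -/
lemma leadsTo_of {R : Finset (Rule M)} {C : M} :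
    ∀ (rs : List (Rule M)) (S : Finset M), IsChiPath R S rs → C ∉ S → C ∈ run S rs →
      ∃ rs' : List (Rule M), IsChiPath R S rs' ∧ LeadsTo C S rs' ∧ ∀ r ∈ rs', r ∈ rs := by
  intro rs
  induction rs with
  | nil => intro S _ hC hrun; simp [run] at hrun; exact absurd hrun hC
  | cons r rs ih =>
      intro S hchi hC hrun
      cases hchi with
      | cons hR hp hn hchi' =>
        by_cases hc : r.concl = C
        · refine ⟨[r], IsChiPath.cons hR hp hn (IsChiPath.nil _), ?_, by simp⟩
          exact ⟨hC, hc⟩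
        · have hC' : C ∉ insert r.concl S := by
            simp; push_neg; exact ⟨fun h => hc h.symm, hC⟩
          obtain ⟨rs', h1, h2, h3⟩ := ih (insert r.concl S) hchi' hC' (by simpa [run] using hrun)
          refine ⟨r :: rs', IsChiPath.cons hR hp hn h1, ?_, ?_⟩
          · cases rs' with
            | nil => exact ((h2 : False)).elim
            | cons r' rs'' => exact ⟨hC, h2⟩
          · intro x hx
            rcases List.mem_cons.1 hx with rfl | hx
            · exact List.mem_cons_self
            · exact List.mem_cons_of_mem _ (h3 x hx)

lemma leadsTo_not_mem_run_dropLast {C : M} :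
    ∀ (rs : List (Rule M)) (S : Finset M), LeadsTo C S rs → C ∉ run S rs.dropLast := by
  intro rs
  induction rs with
  | nil => intro S h; exact ((h : False)).elim
  | cons r rs ih =>
      intro S h
      cases rs with
      | nil => simpa [run] using h.1
      | cons r' rs' =>
          have h2 : LeadsTo C (insert r.concl S) (r' :: rs') := h.2
          have := ih (insert r.concl S) h2
          simpa [run, List.dropLast] using this

end Aux

/-- Checkpoint: if every χ-path from `S₀` leading to `C` satisfies
(i) `B` belongs to the next-to-last state and (ii) `B ∈ S₀` implies `B ∈ Ŝ₁ ∪ ⋯ ∪ Ŝ_m`,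
then `B` is necessary for the production of `C`. -/
theorem stmt10 {M : Type} [DecidableEq M] (R : Finset (Rule M)) (S₀ : Finset M)
    (B C : M) (hC : C ∉ S₀)
    (h : ∀ rs : List (Rule M), IsChiPath R S₀ rs → LeadsTo C S₀ rs →
      B ∈ run S₀ rs.dropLast ∧ (B ∈ S₀ → B ∈ hatUnion S₀ rs)) :
    ∀ E : Expl M, IsExpl S₀ R C E → B ∈ E.mets := by
  intro E hE
  obtain ⟨rs₀, hchi₀, hmem₀, hCrun⟩ := produce hE S₀ (Finset.Subset.refl _)
  obtain ⟨rs, hchi, hlead, hsub⟩ := leadsTo_of rs₀ S₀ hchi₀ hC hCrun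
  have hrules : ∀ r ∈ rs, r ∈ E.rules := fun r hr => hmem₀ r (hsub r hr)
  obtain ⟨hB1, hB2⟩ := h rs hchi hlead
  have hCnot : C ∉ run S₀ rs.dropLast := leadsTo_not_mem_run_dropLast rs S₀ hlead
  rw [run_eq] at hB1
  rcases Finset.mem_union.1 hB1 with hB0 | hBc
  · -- B ∈ S₀: use (ii)
    obtain ⟨r, hr, hBr⟩ := mem_hatUnion.1 (hB2 hB0)
    exact prem_subset_mets hE (hrules r hr)
      (mem_premSet_of_mem_premises (Finset.mem_inter.1 hBr).1)
  · -- B is the conclusion of an earlier rule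
    simp only [List.mem_toFinset, List.mem_map] at hBc
    obtain ⟨r, hr, hBr⟩ := hBc
    have hrE : r ∈ E.rules := hrules r ((List.dropLast_sublist rs).subset hr)
    rcases concl_mem_mets hE hrE with hrc | hrc
    · exfalso
      apply hCnot
      rw [run_eq]
      exact Finset.mem_union_right _ (by
        simp only [List.mem_toFinset, List.mem_map]
        exact ⟨r, hr, hrc⟩)
    · rw [hBr] at hrc; exact hrc
end

section
/- In any ρ-path S₀ →_{Θ₁,Ŝ₁,X₁} S₁ → ⋯ →_{Θ_m,Ŝ_m,X_m} S_m from S₀ in Gr((R,S₀)), the produced metabolites X₁,…,X_m are pairwise distinct; consequently, if the type M of metabolites is finite, every ρ-path has length at most |M|. -/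
/-- in any ρ-path the produced metabolites are pairwise distinct; hence if
`M` is finite, every ρ-path has length at most `|M|`. -/
theorem stmt15 {M : Type} [DecidableEq M] (R : Finset (Rule M)) (S₀ : Finset M)
    (rs : List (Rule M)) (h : IsRhoPath R S₀ rs) :
    (rs.map Rule.concl).Nodup ∧ (∀ _ : Finite M, rs.length ≤ Nat.card M) := by
  have key : ∀ (rs : List (Rule M)) (Xs Us S : Finset M), IsRhoAux R S₀ Xs Us S rs →
      Xs ⊆ S → (rs.map Rule.concl).Nodup ∧ ∀ x ∈ rs.map Rule.concl, x ∉ Xs := by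
    intro rs
    induction rs with
    | nil => intro Xs Us S _ _; simp
    | cons r rs ih =>
      intro Xs Us S h hsub
      obtain ⟨_, _, hself, haux⟩ := h
      have hfresh : r.concl ∉ Xs := by
        by_cases hc : r.concl ∈ S
        · exact (hself hc).2.1
        · exact fun hx => hc (hsub hx)
      have hsub' : insert r.concl Xs ⊆ insert r.concl S :=
        Finset.insert_subset_insert _ hsub
      obtain ⟨hnd, hnot⟩ := ih _ _ _ haux hsub'
      constructor
      · simp only [List.map_cons, List.nodup_cons]
        exact ⟨fun hx => hnot _ hx (Finset.mem_insert_self _ _), hnd⟩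
      · intro x hx hxXs
        simp only [List.map_cons, List.mem_cons] at hx
        rcases hx with rfl | hx
        · exact hfresh hxXs
        · exact hnot _ hx (Finset.mem_insert_of_mem hxXs)
  have hnd := (key rs ∅ ∅ S₀ h (Finset.empty_subset _)).1
  refine ⟨hnd, fun hfin => ?_⟩
  have : Fintype M := Fintype.ofFinite M
  have := hnd.length_le_card
  simpa [Nat.card_eq_fintype_card] using this
end
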